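/- Let V and W be finite-dimensional complex vector spaces, and let ⟨·,·⟩_V and ⟨·,·⟩_W be Hermitian sesquilinear forms on V and W respectively (possibly degenerate). Assume ⟨·,·⟩_V is indefinite, i.e., there exist u, v ∈ V with ⟨u,u⟩_V > 0 and ⟨v,v⟩_V < 0. If G : V → W is a ℂ-linear map such that ⟨Gx,Gx⟩_W = 0 for every x ∈ V with ⟨x,x⟩_V = 0, then there exists λ ∈ ℝ such that ⟨Gx,Gy⟩_W = λ·⟨x,y⟩_V for all x, y ∈ V. -/

import Mathlib

lemma expand_aux {V : Type*} [AddCommGroup V] [Module ℂ V]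
    (B : V →ₗ⋆[ℂ] V →ₗ[ℂ] ℂ) (x y : V) (c d : ℂ) :
    B (c•x + d•y) (c•x + d•y) =
      (starRingEnd ℂ c) * c * B x x + (starRingEnd ℂ c) * d * B x y +
      (starRingEnd ℂ d) * c * B y x + (starRingEnd ℂ d) * d * B y y := by
  simp only [map_add, map_smulₛₗ, LinearMap.add_apply, LinearMap.smul_apply, map_smul,
    smul_eq_mul, RingHom.id_apply]
  ring

lemma polar_aux {V : Type*} [AddCommGroup V] [Module ℂ V]
    (B : V →ₗ⋆[ℂ] V →ₗ[ℂ] ℂ) (x y : V) :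
    4 * B x y = B (x+y) (x+y) - B (x-y) (x-y)
      - Complex.I * B (x + Complex.I•y) (x + Complex.I•y)
      + Complex.I * B (x - Complex.I•y) (x - Complex.I•y) := by
  simp only [map_add, map_sub, map_smulₛₗ, LinearMap.add_apply, LinearMap.sub_apply,
    LinearMap.smul_apply, map_smul, smul_eq_mul, RingHom.id_apply, Complex.conj_I,
    Complex.I_mul_I, mul_neg, neg_mul]
  ring_nf
  rw [Complex.I_sq]
  ring

lemma unimod_aux (s : ℂ) : ∃ c : ℂ, (starRingEnd ℂ c) * c = 1 ∧
    c * s + (starRingEnd ℂ c) * (starRingEnd ℂ s) = 0 := by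
  by_cases hs : s = 0
  · exact ⟨1, by simp, by simp [hs]⟩
  · have hr : (‖s‖ : ℂ) ≠ 0 := by
      simpa using (norm_ne_zero_iff.mpr hs : ‖s‖ ≠ 0)
    have hmc : s * starRingEnd ℂ s = ((‖s‖ : ℝ) : ℂ) ^ 2 := by
      rw [Complex.mul_conj]
      norm_cast
      rw [Complex.sq_norm]
    refine ⟨Complex.I * (starRingEnd ℂ s) / (‖s‖ : ℂ), ?_, ?_⟩
    · rw [map_div₀, map_mul, Complex.conj_I, Complex.conj_conj, Complex.conj_ofReal]
      field_simp
      linear_combination hmc - (s * starRingEnd ℂ s) * Complex.I_sq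
    · rw [map_div₀, map_mul, Complex.conj_I, Complex.conj_conj, Complex.conj_ofReal]
      field_simp
      ring

theorem stmt_4 (V W : Type*) [AddCommGroup V] [Module ℂ V] [AddCommGroup W] [Module ℂ W]
    [FiniteDimensional ℂ V] [FiniteDimensional ℂ W]
    (BV : V →ₗ⋆[ℂ] V →ₗ[ℂ] ℂ) (BW : W →ₗ⋆[ℂ] W →ₗ[ℂ] ℂ)
    (hBV : ∀ x y : V, BV x y = starRingEnd ℂ (BV y x))
    (hBW : ∀ x y : W, BW x y = starRingEnd ℂ (BW y x))
    (hindef : ∃ u v : V, 0 < (BV u u).re ∧ (BV v v).re < 0)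
    (G : V →ₗ[ℂ] W)
    (hnull : ∀ x : V, BV x x = 0 → BW (G x) (G x) = 0) :
    ∃ lam : ℝ, ∀ x y : V, BW (G x) (G y) = (lam : ℂ) * BV x y := by
  obtain ⟨u, v, hu, hv⟩ := hindef
  have hVreal : ∀ x : V, BV x x = ((BV x x).re : ℂ) :=
    fun x => (Complex.conj_eq_iff_re.mp (hBV x x).symm).symm
  have hWreal : ∀ w : W, BW w w = ((BW w w).re : ℂ) :=
    fun w => (Complex.conj_eq_iff_re.mp (hBW w w).symm).symm
  have step : ∀ x y : V, 0 < (BV x x).re → (BV y y).re < 0 →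
      (BW (G x) (G x)).re * (BV y y).re = (BW (G y) (G y)).re * (BV x x).re := by
    intro x y ha hb
    obtain ⟨c, hc1, hc2⟩ := unimod_aux (BV x y)
    set t : ℝ := Real.sqrt (-(BV y y).re / (BV x x).re) with ht'
    have ht2 : t ^ 2 = -(BV y y).re / (BV x x).re :=
      Real.sq_sqrt (div_nonneg (by linarith) ha.le)
    have hta : t ^ 2 * (BV x x).re = -(BV y y).re := by
      rw [ht2]; field_simp
    -- null vectors
    have hz : ∀ e : ℂ, (starRingEnd ℂ e) * e = 1 →
        e * BV x y + (starRingEnd ℂ e) * (starRingEnd ℂ (BV x y)) = 0 →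
        BW (G ((t:ℂ) • x + e • y)) (G ((t:ℂ) • x + e • y)) = 0 := by
      intro e he1 he2
      apply hnull
      rw [expand_aux, hBV y x, hVreal x, hVreal y, Complex.conj_ofReal]
      have key : ((t:ℂ)) * (t:ℂ) * ((BV x x).re : ℂ) + ((BV y y).re : ℂ) = 0 := by
        have : ((t * t * (BV x x).re + (BV y y).re : ℝ) : ℂ) = ((0:ℝ) : ℂ) := by
          norm_cast
          nlinarith [hta]
        push_cast at this
        exact this
      linear_combination key + (t:ℂ) * he2 + ((BV y y).re : ℂ) * he1
    have hmc : (-c) * BV x y + (starRingEnd ℂ (-c)) * (starRingEnd ℂ (BV x y)) = 0 := by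
      rw [map_neg]
      linear_combination -hc2
    have hmc1 : (starRingEnd ℂ (-c)) * (-c) = 1 := by
      rw [map_neg]
      linear_combination hc1
    have h1 := hz c hc1 hc2
    have h2 := hz (-c) hmc1 hmc
    -- expand the two null conditions for BW
    rw [map_add, map_smul, map_smul] at h1 h2
    have e1 : ∀ e : ℂ, BW ((t:ℂ) • G x + e • G y) ((t:ℂ) • G x + e • G y) =
        (t:ℂ) * (t:ℂ) * BW (G x) (G x) + (t:ℂ) * e * BW (G x) (G y)
        + (starRingEnd ℂ e) * (t:ℂ) * BW (G y) (G x)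
        + (starRingEnd ℂ e) * e * BW (G y) (G y) := by
      intro e
      rw [expand_aux, Complex.conj_ofReal]
    rw [e1 c] at h1
    rw [e1 (-c)] at h2
    have hsum : (t:ℂ) * (t:ℂ) * BW (G x) (G x) + BW (G y) (G y) = 0 := by
      rw [map_neg] at h2
      linear_combination (h1 + h2) / 2 - BW (G y) (G y) * hc1
    rw [hWreal (G x), hWreal (G y)] at hsum
    have hre : t * t * (BW (G x) (G x)).re + (BW (G y) (G y)).re = 0 := by
      have : (((t * t * (BW (G x) (G x)).re + (BW (G y) (G y)).re : ℝ)) : ℂ) = 0 := by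
        push_cast
        linear_combination hsum
      exact_mod_cast this
    have ht3 : t * t = -(BV y y).re / (BV x x).re := by
      nlinarith [ht2]
    rw [ht3] at hre
    have hane : (BV x x).re ≠ 0 := ne_of_gt ha
    field_simp at hre
    linarith
  set lam : ℝ := (BW (G v) (G v)).re / (BV v v).re with hlam
  have hbvne : (BV v v).re ≠ 0 := ne_of_lt hv
  have main : ∀ x : V, (BW (G x) (G x)).re = lam * (BV x x).re := by
    intro x
    rcases lt_trichotomy ((BV x x).re) 0 with h | h | h
    · -- negative
      have h1 := step u x hu h
      have h2 := step u v hu hv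
      have haune : (BV u u).re ≠ 0 := ne_of_gt hu
      rw [hlam]
      rw [div_mul_eq_mul_div, eq_div_iff hbvne]
      apply mul_left_cancel₀ haune
      linear_combination (BV x x).re * h2 - (BV v v).re * h1
    · have hq : BV x x = 0 := by rw [hVreal x, h]; norm_num
      rw [hnull x hq, h]
      simp
    · have h1 := step x v h hv
      rw [hlam, div_mul_eq_mul_div, eq_div_iff hbvne]
      linarith [h1]
  have key : ∀ x : V, BW (G x) (G x) = (lam : ℂ) * BV x x := by
    intro x
    rw [hWreal (G x), main x]
    push_cast
    rw [← hVreal x]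
  refine ⟨lam, fun x y => ?_⟩
  have pW := polar_aux BW (G x) (G y)
  simp only [← map_add, ← map_sub, ← map_smul] at pW
  rw [key (x + y), key (x - y), key (x + Complex.I • y), key (x - Complex.I • y)] at pW
  have pV := polar_aux BV x y
  linear_combination pW / 4 - ((lam : ℂ) / 4) * pV
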